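/- Let a : ℕ → R be a sequence in a commutative ring and u(n,k) = det(a_{n+i+j})_{i,j=0}^{k-1}. Then for all n ≥ 0 and k ≥ 2: u(n,k)·u(n+2,k-2) - u(n+2,k-1)·u(n,k-1) + u(n+1,k-1)^2 = 0. -/

import Mathlib

open Matrix

set_option linter.unusedSectionVars false
section helpers
variable {S : Type*} [CommRing S]

lemma my_updateRow_comm {m n' : Type*} [DecidableEq m] (M : Matrix m n' S) {i j : m}
    (h : i ≠ j) (u v : n' → S) :
    (M.updateRow i u).updateRow j v = (M.updateRow j v).updateRow i u := by
  ext a b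
  rcases eq_or_ne a j with rfl | haj
  · simp [Matrix.updateRow_apply, h.symm]
  · rcases eq_or_ne a i with rfl | hai
    · simp [Matrix.updateRow_apply, haj]
    · simp [Matrix.updateRow_apply, haj, hai]

lemma my_one_row {m : Type*} [DecidableEq m] (i : m) :
    (1 : Matrix m m S) i = Pi.single i 1 := by
  funext j; simp [Matrix.one_apply, Pi.single_apply, eq_comm]

lemma my_det_updateRow_finset_sum {m : Type*} [DecidableEq m] [Fintype m]
    (M : Matrix m m S) (j : m) {ι : Type*} (s : Finset ι) (f : ι → m → S) :
    (M.updateRow j (∑ q ∈ s, f q)).det = ∑ q ∈ s, (M.updateRow j (f q)).det := by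
  classical
  induction s using Finset.induction_on with
  | empty =>
      simp only [Finset.sum_empty]
      exact Matrix.det_eq_zero_of_row_eq_zero j (by simp)
  | @insert q s hq ih =>
      rw [Finset.sum_insert hq, Matrix.det_updateRow_add, ih, Finset.sum_insert hq]

lemma my_det_updateRow_expand {m : Type*} [DecidableEq m] [Fintype m]
    (M : Matrix m m S) (j : m) (b : m → S) :
    (M.updateRow j b).det = ∑ q, b q * (M.updateRow j (Pi.single q 1)).det := by
  conv_lhs => rw [show b = ∑ q, Pi.single q (b q) from (Finset.univ_sum_single b).symm]
  rw [my_det_updateRow_finset_sum]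
  refine Finset.sum_congr rfl fun q _ => ?_
  have : Pi.single q (b q) = b q • (Pi.single q 1 : m → S) := by
    rw [← Pi.single_smul, smul_eq_mul, mul_one]
  rw [this, Matrix.det_updateRow_smul]

end helpers

section detE
variable {S : Type*} [CommRing S]

lemma my_detE (n : ℕ) (p q : Fin (n + 2)) :
    (((1 : Matrix (Fin (n + 2)) (Fin (n + 2)) S).updateRow (Fin.last (n + 1))
        (Pi.single q 1)).updateRow 0 (Pi.single p 1)).det =
      (if p = 0 then (1 : S) else 0) * (if q = Fin.last (n + 1) then 1 else 0) -
      (if p = Fin.last (n + 1) then 1 else 0) * (if q = 0 then 1 else 0) := by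
  have hL0 : (Fin.last (n + 1)) ≠ (0 : Fin (n + 2)) := by
    simp [Fin.ext_iff]
  set L : Fin (n + 2) := Fin.last (n + 1) with hL
  set E := ((1 : Matrix (Fin (n + 2)) (Fin (n + 2)) S).updateRow L
        (Pi.single q 1)).updateRow 0 (Pi.single p 1) with hE
  have hrow0 : E 0 = Pi.single p 1 := Matrix.updateRow_self
  have hrowL : E L = Pi.single q 1 := by
    rw [hE, Matrix.updateRow_ne hL0, Matrix.updateRow_self]
  have hrowmid : ∀ i : Fin (n + 2), i ≠ 0 → i ≠ L → E i = Pi.single i 1 := by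
    intro i h0 hLi
    rw [hE, Matrix.updateRow_ne h0, Matrix.updateRow_ne hLi, my_one_row]
  rcases eq_or_ne q 0 with rfl | hq0
  · rcases eq_or_ne p L with rfl | hpL
    · -- swap case, det = -1
      have hEeq : E = (1 : Matrix (Fin (n + 2)) (Fin (n + 2)) S).submatrix
          (Equiv.swap 0 L) id := by
        ext i j
        rcases eq_or_ne i 0 with rfl | hi0
        · rw [hrow0]
          rw [Matrix.submatrix_apply, Equiv.swap_apply_left, id_eq, ← my_one_row]
        · rcases eq_or_ne i L with rfl | hiL
          · rw [hrowL]
            rw [Matrix.submatrix_apply, Equiv.swap_apply_right, id_eq, ← my_one_row]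
          · rw [hrowmid i hi0 hiL]
            rw [Matrix.submatrix_apply, Equiv.swap_apply_of_ne_of_ne hi0 hiL, id_eq,
              ← my_one_row]
      rw [hEeq, Matrix.det_permute]
      simp [Equiv.Perm.sign_swap (Ne.symm hL0), hL0]
    · -- det 0
      rcases eq_or_ne p 0 with rfl | hp0
      · rw [Matrix.det_zero_of_row_eq hL0.symm (by rw [hrow0, hrowL])]
        simp [hL0, Ne.symm hL0]
      · rw [Matrix.det_zero_of_row_eq (Ne.symm hp0) (by rw [hrow0, hrowmid p hp0 hpL])]
        simp [hp0, hpL]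
  · rcases eq_or_ne q L with rfl | hqL
    · rcases eq_or_ne p 0 with rfl | hp0
      · -- identity
        have hEeq : E = 1 := by
          ext i j
          rcases eq_or_ne i 0 with rfl | hi0
          · rw [hrow0, ← my_one_row]
          · rcases eq_or_ne i L with rfl | hiL
            · rw [hrowL, ← my_one_row]
            · rw [hrowmid i hi0 hiL, ← my_one_row]
        rw [hEeq, Matrix.det_one]
        simp [Ne.symm hL0, hL0]
      · rcases eq_or_ne p L with rfl | hpL
        · rw [Matrix.det_zero_of_row_eq hL0.symm (by rw [hrow0, hrowL])]
          simp [Ne.symm hL0, hq0]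
        · rw [Matrix.det_zero_of_row_eq (Ne.symm hp0) (by rw [hrow0, hrowmid p hp0 hpL])]
          simp [hp0, hq0]
    · rw [Matrix.det_zero_of_row_eq hqL (by rw [hrowL, hrowmid q hq0 hqL])]
      simp [hq0, hqL]

end detE

section djmulx
variable {S : Type*} [CommRing S] {n : ℕ}

lemma my_detC (A : Matrix (Fin (n + 2)) (Fin (n + 2)) S) :
    (((1 : Matrix (Fin (n + 2)) (Fin (n + 2)) S).updateRow 0 (A.adjugate 0)).updateRow
        (Fin.last (n + 1)) (A.adjugate (Fin.last (n + 1)))).det =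
      A.adjugate 0 0 * A.adjugate (Fin.last (n + 1)) (Fin.last (n + 1)) -
        A.adjugate 0 (Fin.last (n + 1)) * A.adjugate (Fin.last (n + 1)) 0 := by
  have h0L : (0 : Fin (n + 2)) ≠ Fin.last (n + 1) := by simp [Fin.ext_iff]
  rw [my_det_updateRow_expand]
  have key : ∀ q : Fin (n + 2),
      (((1 : Matrix (Fin (n + 2)) (Fin (n + 2)) S).updateRow 0 (A.adjugate 0)).updateRow
        (Fin.last (n + 1)) (Pi.single q 1)).det =
      ∑ p, A.adjugate 0 p *
        ((if p = 0 then (1 : S) else 0) * (if q = Fin.last (n + 1) then 1 else 0) -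
          (if p = Fin.last (n + 1) then 1 else 0) * (if q = 0 then 1 else 0)) := by
    intro q
    rw [my_updateRow_comm _ h0L, my_det_updateRow_expand]
    exact Finset.sum_congr rfl fun p _ => by rw [my_detE]
  simp only [key]
  simp only [mul_sub, mul_ite, mul_one, mul_zero, ite_mul, zero_mul,
    Finset.sum_sub_distrib, Finset.mul_sum]
  simp [Finset.sum_ite_eq', h0L, Ne.symm h0L, mul_comm]

lemma my_dj_mul (A : Matrix (Fin (n + 2)) (Fin (n + 2)) S) :
    A.det * (A.det *
      (A.submatrix (fun i : Fin n => i.succ.castSucc) (fun j : Fin n => j.succ.castSucc)).det) =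
    A.det * ((A.submatrix Fin.castSucc Fin.castSucc).det * (A.submatrix Fin.succ Fin.succ).det -
      (A.submatrix Fin.castSucc Fin.succ).det * (A.submatrix Fin.succ Fin.castSucc).det) := by
  classical
  have h0L : (0 : Fin (n + 2)) ≠ Fin.last (n + 1) := by simp [Fin.ext_iff]
  set L : Fin (n + 2) := Fin.last (n + 1) with hLdef
  set C : Matrix (Fin (n + 2)) (Fin (n + 2)) S :=
    ((1 : Matrix (Fin (n + 2)) (Fin (n + 2)) S).updateRow 0 (A.adjugate 0)).updateRow
      L (A.adjugate L) with hCdef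
  have hC0 : C 0 = A.adjugate 0 := by
    rw [hCdef, Matrix.updateRow_ne h0L, Matrix.updateRow_self]
  have hCL : C L = A.adjugate L := Matrix.updateRow_self
  have hCmid : ∀ i : Fin (n + 2), i ≠ 0 → i ≠ L → C i = (1 : Matrix _ _ S) i := by
    intro i h0 hL
    rw [hCdef, Matrix.updateRow_ne hL, Matrix.updateRow_ne h0]
  have hadjrow : ∀ (i j : Fin (n + 2)),
      (∑ k, A.adjugate i k * A k j) = (A.det • (Pi.single i 1 : Fin (n+2) → S)) j := by
    intro i j
    have := congrFun (congrFun (Matrix.adjugate_mul A) i) j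
    rw [Matrix.mul_apply] at this
    rw [this, Matrix.smul_apply, my_one_row, Pi.smul_apply]
  have hCA : C * A = (A.updateRow 0 (A.det • (Pi.single 0 1 : Fin (n+2) → S))).updateRow L
      (A.det • (Pi.single L 1 : Fin (n+2) → S)) := by
    ext i j
    rw [Matrix.mul_apply]
    rcases eq_or_ne i 0 with rfl | hi0
    · rw [Matrix.updateRow_ne h0L, Matrix.updateRow_self]
      simp only [hC0]
      exact hadjrow 0 j
    · rcases eq_or_ne i L with rfl | hiL
      · rw [Matrix.updateRow_self]
        simp only [hCL]
        exact hadjrow L j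
      · rw [Matrix.updateRow_ne hiL, Matrix.updateRow_ne hi0]
        simp only [hCmid i hi0 hiL]
        rw [← Matrix.mul_apply, Matrix.one_mul]
  have hsub : ∀ v : Fin (n + 2) → S,
      (A.updateRow 0 v).submatrix (Fin.castSucc : Fin (n+1) → Fin (n+2)) Fin.castSucc =
        (A.submatrix Fin.castSucc Fin.castSucc).updateRow 0 (fun j => v j.castSucc) := by
    intro v
    ext i j
    rcases eq_or_ne i 0 with rfl | hi0
    · simp [Matrix.updateRow_apply]
    · have : i.castSucc ≠ 0 := by
        intro h; exact hi0 (Fin.ext (by simpa using congrArg Fin.val h))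
      simp [Matrix.updateRow_apply, hi0, this]
  have hsingle : (fun j : Fin (n + 1) => (Pi.single 0 1 : Fin (n+2) → S) j.castSucc) =
      (Pi.single (0 : Fin (n + 1)) 1 : Fin (n+1) → S) := by
    funext j
    rcases eq_or_ne j 0 with rfl | hj
    · simp
    · have : j.castSucc ≠ 0 := by
        intro h; exact hj (Fin.ext (by simpa using congrArg Fin.val h))
      simp [Pi.single_apply, this, hj]
  have hD : ((A.updateRow 0 (Pi.single 0 1 : Fin (n+2) → S)).updateRow L
      (Pi.single L 1 : Fin (n+2) → S)).det =
      (A.submatrix (fun i : Fin n => i.succ.castSucc)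
        (fun j : Fin n => j.succ.castSucc)).det := by
    rw [← Matrix.adjugate_apply, Matrix.adjugate_fin_succ_eq_det_submatrix, hLdef,
      Fin.succAbove_last, hsub, hsingle, ← Matrix.adjugate_apply,
      Matrix.adjugate_fin_succ_eq_det_submatrix, Fin.succAbove_zero,
      Matrix.submatrix_submatrix]
    have he1 : (-1 : S) ^ ((Fin.last (n+1)).1 + (Fin.last (n+1)).1) = 1 :=
      Even.neg_one_pow ⟨n + 1, by simp [Fin.val_last]⟩
    have he2 : (-1 : S) ^ ((0 : Fin (n+1)).1 + (0 : Fin (n+1)).1) = 1 := by norm_num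
    rw [he1, he2, one_mul, one_mul]
    rfl
  have hadj00 : A.adjugate 0 0 = (A.submatrix Fin.succ Fin.succ).det := by
    rw [Matrix.adjugate_fin_succ_eq_det_submatrix]
    simp
  have hadjLL : A.adjugate L L = (A.submatrix Fin.castSucc Fin.castSucc).det := by
    rw [Matrix.adjugate_fin_succ_eq_det_submatrix, hLdef, Fin.succAbove_last]
    rw [Even.neg_one_pow ⟨n + 1, by simp [Fin.val_last]⟩, one_mul]
  have hadj0L : A.adjugate 0 L = (-1 : S) ^ (L.1) *
      (A.submatrix Fin.castSucc Fin.succ).det := by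
    rw [Matrix.adjugate_fin_succ_eq_det_submatrix, hLdef, Fin.succAbove_last,
      Fin.succAbove_zero]
    norm_num
  have hadjL0 : A.adjugate L 0 = (-1 : S) ^ (L.1) *
      (A.submatrix Fin.succ Fin.castSucc).det := by
    rw [Matrix.adjugate_fin_succ_eq_det_submatrix, hLdef, Fin.succAbove_zero,
      Fin.succAbove_last]
    norm_num
  have hdetCA := congrArg Matrix.det hCA
  rw [Matrix.det_mul, my_detC, Matrix.det_updateRow_smul, my_updateRow_comm _ h0L,
    Matrix.det_updateRow_smul, my_updateRow_comm _ (Ne.symm h0L), hD, hadj00, hadjLL,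
    hadj0L, hadjL0] at hdetCA
  have hpow : (-1 : S) ^ (L.1) * (-1 : S) ^ (L.1) = 1 := by
    rw [← pow_add]
    exact Even.neg_one_pow ⟨L.1, by omega⟩
  linear_combination (-1 : S) * hdetCA - (A.submatrix Fin.castSucc Fin.succ).det *
    (A.submatrix Fin.succ Fin.castSucc).det * A.det * hpow

end djmulx

section dj

/-- The generic matrix with polynomial entries. -/
noncomputable def myGenMat (m : ℕ) :
    Matrix (Fin m) (Fin m) (MvPolynomial (Fin m × Fin m) ℤ) :=
  Matrix.of fun i j => MvPolynomial.X (i, j)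

lemma myGenMat_det_ne_zero (m : ℕ) : (myGenMat m).det ≠ 0 := by
  intro h
  have h2 := congrArg (MvPolynomial.aeval (R := ℤ)
    (fun p : Fin m × Fin m => if p.1 = p.2 then (1 : ℤ) else 0)) h
  rw [map_zero, AlgHom.map_det] at h2
  have h3 : (MvPolynomial.aeval
      (fun p : Fin m × Fin m => if p.1 = p.2 then (1 : ℤ) else 0)).mapMatrix (myGenMat m)
      = 1 := by
    ext i j
    simp [myGenMat, Matrix.one_apply, MvPolynomial.aeval_X]
  rw [h3, Matrix.det_one] at h2
  exact one_ne_zero h2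

lemma myGenMat_map {R : Type*} [CommRing R] {m : ℕ} (A : Matrix (Fin m) (Fin m) R)
    {l : Type*} [Fintype l] [DecidableEq l] (f g : l → Fin m) :
    (MvPolynomial.aeval (fun p : Fin m × Fin m => A p.1 p.2) :
        MvPolynomial (Fin m × Fin m) ℤ →ₐ[ℤ] R)
      ((myGenMat m).submatrix f g).det = (A.submatrix f g).det := by
  rw [AlgHom.map_det]
  congr 1
  ext i j
  simp [myGenMat, MvPolynomial.aeval_X]

lemma my_dj {R : Type*} [CommRing R] {n : ℕ} (A : Matrix (Fin (n + 2)) (Fin (n + 2)) R) :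
    A.det *
      (A.submatrix (fun i : Fin n => i.succ.castSucc) (fun j : Fin n => j.succ.castSucc)).det =
    (A.submatrix Fin.castSucc Fin.castSucc).det * (A.submatrix Fin.succ Fin.succ).det -
      (A.submatrix Fin.castSucc Fin.succ).det * (A.submatrix Fin.succ Fin.castSucc).det := by
  classical
  have hgen := mul_left_cancel₀ (myGenMat_det_ne_zero (n + 2)) (my_dj_mul (myGenMat (n + 2)))
  have h4 := congrArg (MvPolynomial.aeval (fun p : Fin (n+2) × Fin (n+2) => A p.1 p.2) :
      MvPolynomial (Fin (n+2) × Fin (n+2)) ℤ →ₐ[ℤ] R) hgen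
  have hXA : (MvPolynomial.aeval (fun p : Fin (n+2) × Fin (n+2) => A p.1 p.2) :
      MvPolynomial (Fin (n+2) × Fin (n+2)) ℤ →ₐ[ℤ] R) (myGenMat (n + 2)).det = A.det := by
    rw [AlgHom.map_det]
    congr 1
    ext i j
    simp [myGenMat, MvPolynomial.aeval_X]
  rw [_root_.map_mul, map_sub, _root_.map_mul, _root_.map_mul, hXA, myGenMat_map,
    myGenMat_map, myGenMat_map, myGenMat_map, myGenMat_map] at h4
  exact h4

end dj

theorem stmt_12 {R : Type*} [CommRing R] (a : ℕ → R)
    (u : ℕ → ℕ → R)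
    (hu : ∀ n k : ℕ, u n k = Matrix.det (Matrix.of fun i j : Fin k => a (n + i.1 + j.1))) :
    ∀ n k : ℕ, 2 ≤ k →
      u n k * u (n + 2) (k - 2) - u (n + 2) (k - 1) * u n (k - 1) +
        (u (n + 1) (k - 1)) ^ 2 = 0 := by
  intro n k hk
  obtain ⟨m, rfl⟩ : ∃ m, k = m + 2 := ⟨k - 2, by omega⟩
  set A : Matrix (Fin (m + 2)) (Fin (m + 2)) R :=
    Matrix.of fun i j : Fin (m + 2) => a (n + i.1 + j.1) with hA
  have h1 : u n (m + 2) = A.det := hu n (m + 2)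
  have h2 : u (n + 2) (m + 2 - 2) =
      (A.submatrix (fun i : Fin m => i.succ.castSucc) (fun j : Fin m => j.succ.castSucc)).det := by
    rw [show m + 2 - 2 = m from rfl, hu]
    congr 1
    ext i j
    simp only [Matrix.of_apply, Matrix.submatrix_apply, hA, Fin.coe_castSucc, Fin.val_succ]
    congr 1
    omega
  have h3 : u n (m + 2 - 1) = (A.submatrix Fin.castSucc Fin.castSucc).det := by
    rw [show m + 2 - 1 = m + 1 from rfl, hu]
    rfl
  have h4 : u (n + 2) (m + 2 - 1) = (A.submatrix Fin.succ Fin.succ).det := by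
    rw [show m + 2 - 1 = m + 1 from rfl, hu]
    congr 1
    ext i j
    simp only [Matrix.of_apply, Matrix.submatrix_apply, hA, Fin.val_succ]
    congr 1
    omega
  have h5 : u (n + 1) (m + 2 - 1) = (A.submatrix Fin.castSucc Fin.succ).det := by
    rw [show m + 2 - 1 = m + 1 from rfl, hu]
    congr 1
    ext i j
    simp only [Matrix.of_apply, Matrix.submatrix_apply, hA, Fin.coe_castSucc, Fin.val_succ]
    congr 1
    omega
  have h6 : u (n + 1) (m + 2 - 1) = (A.submatrix Fin.succ Fin.castSucc).det := by
    rw [show m + 2 - 1 = m + 1 from rfl, hu]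
    congr 1
    ext i j
    simp only [Matrix.of_apply, Matrix.submatrix_apply, hA, Fin.coe_castSucc, Fin.val_succ]
    congr 1
    omega
  have hdj := my_dj A
  rw [h1, h2, h3, h4, pow_two]
  nth_rw 1 [h5]
  rw [h6]
  linear_combination hdj
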